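/- arXiv:2006.07646 — 3 statements merged into one kernel-verified Lean document; each statement's English description precedes it below -/
import Mathlib

section
/- For every continuous function f : {0,1}^ℕ → ℂ (product topology), the sequence n ↦ f(Sⁿ 𝛍²) is Besicovitch almost periodic, where S is the left shift on {0,1}^ℕ and 𝛍² = (μ²(n))_{n≥1}. -/
open MeasureTheory Filter Finset

/-- A sequence `φ : ℕ → ℂ` is Besicovitch almost periodic if it can be approximated
arbitrarily well, in the Besicovitch seminorm, by trigonometric polynomials. -/
def BesicovitchAlmostPeriodic (φ : ℕ → ℂ) : Prop :=
  ∀ ε : ℝ, 0 < ε → ∃ (M : ℕ) (c : Fin M → ℂ) (α : Fin M → ℝ),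
    Filter.limsup (fun N : ℕ => (N : ℝ)⁻¹ * ∑ t ∈ Finset.Icc 1 N,
        ‖φ t - ∑ m : Fin M, c m * Complex.exp (Complex.I * (α m) * t)‖)
      Filter.atTop < ε

/-- The left shift on `{0,1}^ℕ`. -/
def shift₂ (x : ℕ → Fin 2) : ℕ → Fin 2 := fun k => x (k + 1)

/-- The point `𝛍² = (μ²(n))_{n ≥ 1}` of `{0,1}^ℕ`: the `k`-th coordinate (`k ≥ 0`)
is `1` if `k+1` is squarefree and `0` otherwise. -/
noncomputable def muSq : ℕ → Fin 2 := fun k => if Squarefree (k + 1) then 1 else 0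

/-! ### Auxiliary lemmas -/

lemma shift_iter (n : ℕ) : ∀ (x : ℕ → Fin 2) (k : ℕ), shift₂^[n] x k = x (k + n) := by
  induction n with
  | zero => intro x k; simp
  | succ n ih =>
    intro x k
    rw [Function.iterate_succ_apply, ih (shift₂ x) k]
    simp only [shift₂]
    rw [Nat.add_assoc]

/-- Continuous functions on `{0,1}^ℕ` are uniformly approximated on cylinders. -/
lemma cylinder_approx (f : C(ℕ → Fin 2, ℂ)) {ε : ℝ} (hε : 0 < ε) :
    ∃ L : ℕ, ∀ x y : ℕ → Fin 2, (∀ i < L, x i = y i) → ‖f x - f y‖ ≤ ε := by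
  have key : ∀ x : ℕ → Fin 2, ∃ s : Finset ℕ,
      ∀ y : ℕ → Fin 2, (∀ i ∈ s, y i = x i) → ‖f y - f x‖ < ε / 3 := by
    intro x
    have hc : f ⁻¹' (Metric.ball (f x) (ε / 3)) ∈ nhds x :=
      f.continuous.continuousAt (Metric.ball_mem_nhds _ (by linarith))
    rw [nhds_pi] at hc
    rw [Filter.mem_pi] at hc
    obtain ⟨I, hIfin, V, hV, hsub⟩ := hc
    refine ⟨hIfin.toFinset, fun y hy => ?_⟩
    have hy' : y ∈ I.pi V := by
      intro i hi
      have := hV i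
      rw [nhds_discrete, Filter.mem_pure] at this
      rw [hy i (hIfin.mem_toFinset.2 hi)]
      exact this
    have := hsub hy'
    simpa [Metric.mem_ball, dist_eq_norm] using this
  choose s hs using key
  set U : (ℕ → Fin 2) → Set (ℕ → Fin 2) := fun x => Set.pi (s x : Set ℕ) (fun i => {x i}) with hU
  have hopen : ∀ x, IsOpen (U x) := fun x =>
    isOpen_set_pi (Finset.finite_toSet _) (fun a _ => isOpen_discrete _)
  have hcover : (Set.univ : Set (ℕ → Fin 2)) ⊆ ⋃ x, U x := by
    intro x _
    exact Set.mem_iUnion.2 ⟨x, fun i _ => rfl⟩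
  obtain ⟨t, ht⟩ := isCompact_univ.elim_finite_subcover U hopen hcover
  refine ⟨(t.sup fun z => (s z).sup id) + 1, fun x y hxy => ?_⟩
  obtain ⟨z, hz, hxz⟩ : ∃ z ∈ t, x ∈ U z := by
    have := ht (Set.mem_univ x)
    simpa using this
  have hxs : ∀ i ∈ s z, x i = z i := fun i hi => hxz i hi
  have hys : ∀ i ∈ s z, y i = z i := by
    intro i hi
    have hiL : i < (t.sup fun z => (s z).sup id) + 1 := by
      have h1 : i ≤ (s z).sup id := Finset.le_sup (f := id) hi
      have h2 : (s z).sup id ≤ t.sup fun z => (s z).sup id :=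
        Finset.le_sup (f := fun z => (s z).sup id) hz
      omega
    rw [← hxy i hiL]
    exact hxs i hi
  have h1 : ‖f x - f z‖ < ε / 3 := hs z x hxs
  have h2 : ‖f y - f z‖ < ε / 3 := hs z y hys
  calc ‖f x - f y‖ = ‖(f x - f z) - (f y - f z)‖ := by ring_nf
    _ ≤ ‖f x - f z‖ + ‖f y - f z‖ := norm_sub_le _ _
    _ ≤ ε := by linarith

lemma periodic_mod {Q : ℕ} (g : ℕ → ℂ) (hg : ∀ t, g (t + Q) = g t) (t : ℕ) :
    g t = g (t % Q) := by
  conv_lhs => rw [← Nat.div_add_mod t Q]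
  generalize t / Q = q
  induction q with
  | zero => simp
  | succ n ih => rw [Nat.mul_succ, add_comm (Q*n) Q, add_assoc, add_comm Q, hg, ih]

/-- Every periodic sequence is exactly a trigonometric polynomial. -/
lemma periodic_trig {Q : ℕ} (hQ : 0 < Q) (g : ℕ → ℂ) (hg : ∀ t, g (t + Q) = g t) :
    ∃ (c : Fin Q → ℂ) (α : Fin Q → ℝ), ∀ t : ℕ,
      g t = ∑ m : Fin Q, c m * Complex.exp (Complex.I * (α m) * t) := by
  set ζ : ℂ := Complex.exp (2 * Real.pi * Complex.I / Q) with hζ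
  have hprim : IsPrimitiveRoot ζ Q := Complex.isPrimitiveRoot_exp Q hQ.ne'
  have hζQ : ζ ^ Q = 1 := hprim.pow_eq_one
  have hζ0 : ζ ≠ 0 := Complex.exp_ne_zero _
  refine ⟨fun m => (Q : ℂ)⁻¹ * ∑ s ∈ range Q, g s * (ζ ^ ((m : ℕ) * s))⁻¹,
    fun m => 2 * Real.pi * m / Q, fun t => ?_⟩
  have hexp : ∀ (m t : ℕ),
      Complex.exp (Complex.I * ((2 * Real.pi * m / Q : ℝ) : ℂ) * t) = ζ ^ (m * t) := by
    intro m t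
    rw [hζ, ← Complex.exp_nat_mul]
    congr 1
    push_cast
    ring
  have key : ∀ s ∈ range Q,
      (∑ m ∈ range Q, ζ ^ (m * t) * (ζ ^ (m * s))⁻¹)
        = if s = t % Q then (Q : ℂ) else 0 := by
    intro s hs
    rw [Finset.mem_range] at hs
    set w : ℂ := ζ ^ t * (ζ ^ s)⁻¹ with hw
    have hterm : ∀ m : ℕ, ζ ^ (m * t) * (ζ ^ (m * s))⁻¹ = w ^ m := by
      intro m
      rw [hw, mul_pow, mul_comm m t, mul_comm m s, pow_mul, pow_mul, inv_pow]
    rw [Finset.sum_congr rfl (fun m _ => hterm m)]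
    have hpow1 : ∀ a : ℕ, (ζ ^ a) ^ Q = 1 := fun a => by
      rw [← pow_mul, mul_comm, pow_mul, hζQ, one_pow]
    have hwQ : w ^ Q = 1 := by
      rw [hw, mul_pow, inv_pow, hpow1 t, hpow1 s, inv_one, mul_one]
    have hζt : ζ ^ t = ζ ^ (t % Q) := by
      conv_lhs => rw [← Nat.div_add_mod t Q]
      rw [pow_add, pow_mul, hζQ, one_pow, one_mul]
    by_cases hst : s = t % Q
    · have hw1 : w = 1 := by
        rw [hw, hζt, hst, mul_inv_cancel₀ (pow_ne_zero _ hζ0)]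
      simp [hw1, hst]
    · have hw1 : w ≠ 1 := by
        intro h
        apply hst
        have h2 : ζ ^ s = ζ ^ (t % Q) := by
          have := congrArg (· * ζ ^ s) h
          simp only [one_mul] at this
          rw [hw, mul_assoc, inv_mul_cancel₀ (pow_ne_zero _ hζ0), mul_one] at this
          rw [← this, hζt]
        exact hprim.pow_inj hs (Nat.mod_lt _ hQ) h2
      have hgm := geom_sum_mul w Q
      rw [hwQ, sub_self] at hgm
      have hsum : ∑ i ∈ range Q, w ^ i = 0 := by
        rcases mul_eq_zero.1 hgm with h | h
        · exact h
        · exact absurd (sub_eq_zero.1 h) hw1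
      simp [hsum, hst]
  calc g t = g (t % Q) := periodic_mod g hg t
    _ = ∑ m : Fin Q, ((Q : ℂ)⁻¹ * ∑ s ∈ range Q, g s * (ζ ^ ((m : ℕ) * s))⁻¹)
          * Complex.exp (Complex.I * ((2 * Real.pi * (m : ℕ) / Q : ℝ) : ℂ) * t) := by
      rw [Fin.sum_univ_eq_sum_range (fun m => ((Q : ℂ)⁻¹ * ∑ s ∈ range Q, g s * (ζ ^ (m * s))⁻¹)
          * Complex.exp (Complex.I * ((2 * Real.pi * m / Q : ℝ) : ℂ) * t)) Q]
      have step1 : ∀ m ∈ range Q, ((Q : ℂ)⁻¹ * ∑ s ∈ range Q, g s * (ζ ^ (m * s))⁻¹)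
          * Complex.exp (Complex.I * ((2 * Real.pi * m / Q : ℝ) : ℂ) * t)
          = ∑ s ∈ range Q, (Q : ℂ)⁻¹ * (g s * (ζ ^ (m * t) * (ζ ^ (m * s))⁻¹)) := by
        intro m _
        rw [hexp m t, Finset.mul_sum, Finset.sum_mul, Finset.sum_congr rfl]
        intro s _
        ring
      rw [Finset.sum_congr rfl step1, Finset.sum_comm]
      have step2 : ∀ s ∈ range Q,
          ∑ m ∈ range Q, (Q : ℂ)⁻¹ * (g s * (ζ ^ (m * t) * (ζ ^ (m * s))⁻¹))
          = (Q : ℂ)⁻¹ * g s * (if s = t % Q then (Q : ℂ) else 0) := by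
        intro s hs
        rw [← key s hs, Finset.mul_sum]
        exact Finset.sum_congr rfl fun m _ => by ring
      rw [Finset.sum_congr rfl step2]
      simp only [mul_ite, mul_zero]
      rw [Finset.sum_ite_eq' (range Q) (t % Q)]
      simp only [Finset.mem_range, Nat.mod_lt t hQ, if_true]
      have hQ0 : (Q : ℂ) ≠ 0 := Nat.cast_ne_zero.2 hQ.ne'
      field_simp

open Classical in
/-- The `K`-free approximant to the squarefree indicator. -/
noncomputable def muSqK (K : ℕ) : ℕ → Fin 2 := fun k =>
  if ∀ d, 1 < d → d ≤ K → ¬ (d * d ∣ k + 1) then 1 else 0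

lemma muSqK_periodic (K : ℕ) (k : ℕ) :
    muSqK K (k + ∏ d ∈ Icc 2 K, d * d) = muSqK K k := by
  set Q := ∏ d ∈ Icc 2 K, d * d with hQ
  have hdvd : ∀ d, 1 < d → d ≤ K → d * d ∣ Q := by
    intro d h1 h2
    exact Finset.dvd_prod_of_mem _ (Finset.mem_Icc.2 ⟨h1, h2⟩)
  have hiff : (∀ d, 1 < d → d ≤ K → ¬ (d * d ∣ (k + Q) + 1)) ↔
      (∀ d, 1 < d → d ≤ K → ¬ (d * d ∣ k + 1)) := by
    constructor <;> intro h d h1 h2 hd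
    · refine h d h1 h2 ?_
      have h3 : k + Q + 1 = (k + 1) + Q := by ring
      rw [h3]
      exact Nat.dvd_add hd (hdvd d h1 h2)
    · apply h d h1 h2
      have h3 : k + Q + 1 = (k + 1) + Q := by ring
      rw [h3] at hd
      have := Nat.dvd_sub hd (hdvd d h1 h2)
      rwa [Nat.add_sub_cancel] at this
  simp only [muSqK]
  congr 1
  exact propext hiff

lemma prodQ_pos (K : ℕ) : 0 < ∏ d ∈ Icc 2 K, d * d :=
  Finset.prod_pos fun d hd => by
    have := (Finset.mem_Icc.1 hd).1; positivity

lemma muSq_diff (K k : ℕ) (h : muSq k ≠ muSqK K k) :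
    ∃ d, K < d ∧ d * d ∣ k + 1 := by
  unfold muSq muSqK at h
  by_cases hsf : Squarefree (k + 1)
  · exfalso
    apply h
    rw [if_pos hsf, if_pos]
    intro d h1 _ hd
    have := hsf d hd
    rw [Nat.isUnit_iff] at this
    omega
  · obtain ⟨x, hx, hxu⟩ : ∃ x, x * x ∣ k + 1 ∧ ¬ IsUnit x := by
      unfold Squarefree at hsf
      push_neg at hsf
      exact hsf
    rw [Nat.isUnit_iff] at hxu
    have hx0 : x ≠ 0 := by
      rintro rfl
      simp at hx
    rw [if_neg hsf] at h
    by_cases hcond : ∀ d, 1 < d → d ≤ K → ¬ (d * d ∣ k + 1)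
    · refine ⟨x, ?_, hx⟩
      by_contra hxK
      exact hcond x (by omega) (by omega) hx
    · rw [if_neg hcond] at h
      exact absurd rfl h

lemma tail_sum_le {K : ℕ} (hK : 0 < K) (D : ℕ) :
    ∑ d ∈ Ioc K D, (1 : ℝ) / (d * d) ≤ 1 / K := by
  have main : ∀ n : ℕ, ∑ d ∈ Ioc K (K + n), (1 : ℝ) / (d * d) ≤ 1 / K - 1 / (K + n) := by
    intro n
    induction n with
    | zero => simp
    | succ n ih =>
      rw [show K + (n + 1) = (K + n) + 1 from rfl, Finset.sum_Ioc_succ_top (Nat.le_add_right K n)]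
      have hK0 : (0:ℝ) < (K:ℝ) := Nat.cast_pos.2 hK
      have hKn : (0:ℝ) < (K:ℝ) + n := by positivity
      have hstep : (1 : ℝ) / ((↑(K + n + 1)) * (↑(K + n + 1)))
          ≤ 1 / ((K:ℝ) + n) - 1 / ((K:ℝ) + n + 1) := by
        have e : (1:ℝ) / ((K:ℝ) + n) - 1 / ((K:ℝ) + n + 1)
            = 1 / (((K:ℝ) + n) * ((K:ℝ) + n + 1)) := by
          field_simp
          ring
        rw [e]
        push_cast
        apply one_div_le_one_div_of_le (by positivity)
        nlinarith
      have hre : (1:ℝ) / ((K:ℝ) + (↑n + 1)) = 1 / ((K:ℝ) + ↑n + 1) := by ring_nf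
      push_cast at ih hstep ⊢
      rw [hre]
      linarith
  rcases le_or_gt D K with h | h
  · rw [Finset.Ioc_eq_empty (by omega)]
    simp
  · have h2 := main (D - K)
    rw [show K + (D - K) = D by omega] at h2
    have hK0 : (0:ℝ) < (K:ℝ) := Nat.cast_pos.2 hK
    have h3 : (0:ℝ) ≤ 1 / ((K:ℝ) + ((D - K : ℕ) : ℝ)) := by positivity
    linarith

open Classical in
lemma count_bound (N c K : ℕ) (hK : 0 < K) (hc : 0 < c) :
    ((((Icc 1 N)).filter (fun n => ∃ d, K < d ∧ d * d ∣ n + c)).card : ℝ)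
      ≤ (N + c) / K := by
  classical
  set S := (Icc 1 N).filter (fun n => ∃ d, K < d ∧ d * d ∣ n + c) with hS
  have hsub : S ⊆ (Ioc K (N + c)).biUnion
      (fun d => (Icc 1 N).filter (fun n => d * d ∣ n + c)) := by
    intro n hn
    rw [hS, Finset.mem_filter] at hn
    obtain ⟨hn1, d, hd1, hd2⟩ := hn
    rw [Finset.mem_biUnion]
    refine ⟨d, Finset.mem_Ioc.2 ⟨hd1, ?_⟩, Finset.mem_filter.2 ⟨hn1, hd2⟩⟩
    have h1 : 0 < n + c := by omega
    have h2 : d * d ≤ n + c := Nat.le_of_dvd h1 hd2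
    have h3 : n ≤ N := (Finset.mem_Icc.1 hn1).2
    nlinarith
  have hcard_d : ∀ d ∈ Ioc K (N + c),
      ((Icc 1 N).filter (fun n => d * d ∣ n + c)).card ≤ (N + c) / (d * d) := by
    intro d hd
    have hd1 : K < d := (Finset.mem_Ioc.1 hd).1
    have hq : 0 < d * d := by nlinarith
    have hinj : ((Icc 1 N).filter (fun n => d * d ∣ n + c)).card
        ≤ (Icc 1 ((N + c) / (d * d))).card := by
      apply Finset.card_le_card_of_injOn (fun n => (n + c) / (d * d))
      · intro n hn
        rw [Finset.mem_coe, Finset.mem_filter] at hn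
        obtain ⟨hn1, hdvd⟩ := hn
        rw [Finset.mem_coe, Finset.mem_Icc]
        constructor
        · rw [Nat.one_le_div_iff hq]
          exact Nat.le_of_dvd (by omega) hdvd
        · exact Nat.div_le_div_right (by have := (Finset.mem_Icc.1 hn1).2; omega)
      · intro a ha b hb hab
        simp only [Finset.coe_filter, Set.mem_setOf_eq] at ha hb
        have hab' : (a + c) / (d * d) = (b + c) / (d * d) := hab
        have h1 : a + c = d * d * ((a + c) / (d * d)) := by
          rw [Nat.mul_div_cancel' ha.2]
        have h2 : b + c = d * d * ((b + c) / (d * d)) := by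
          rw [Nat.mul_div_cancel' hb.2]
        rw [hab'] at h1
        omega
    simpa [Nat.card_Icc] using hinj
  have step1 : (S.card : ℝ) ≤ ∑ d ∈ Ioc K (N + c), (((N + c) / (d * d) : ℕ) : ℝ) := by
    have hle := Finset.card_le_card hsub
    have h2 := Finset.card_biUnion_le (s := Ioc K (N + c))
      (t := fun d => (Icc 1 N).filter (fun n => d * d ∣ n + c))
    have h3 : S.card ≤ ∑ d ∈ Ioc K (N + c), ((Icc 1 N).filter (fun n => d * d ∣ n + c)).card :=
      le_trans hle h2
    calc (S.card : ℝ)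
        ≤ ((∑ d ∈ Ioc K (N + c), ((Icc 1 N).filter (fun n => d * d ∣ n + c)).card : ℕ) : ℝ) := by
          exact_mod_cast h3
      _ ≤ _ := by
          push_cast
          exact Finset.sum_le_sum fun d hd => by exact_mod_cast hcard_d d hd
  have step2 : ∑ d ∈ Ioc K (N + c), (((N + c) / (d * d) : ℕ) : ℝ)
      ≤ (N + c : ℝ) * ∑ d ∈ Ioc K (N + c), (1 : ℝ) / (d * d) := by
    rw [Finset.mul_sum]
    apply Finset.sum_le_sum
    intro d hd
    have hd1 : K < d := (Finset.mem_Ioc.1 hd).1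
    have hq : (0:ℝ) < (d:ℝ) * d := by
      have : 0 < d := by omega
      positivity
    calc (((N + c) / (d * d) : ℕ) : ℝ) ≤ ((N + c : ℕ) : ℝ) / (((d * d : ℕ)) : ℝ) :=
          Nat.cast_div_le
      _ = (N + c : ℝ) * (1 / ((d:ℝ) * d)) := by push_cast; ring
  have step3 := tail_sum_le hK (N + c)
  have hK0 : (0:ℝ) < (K:ℝ) := Nat.cast_pos.2 hK
  have hNc : (0:ℝ) ≤ (N + c : ℝ) := by positivity
  calc (S.card : ℝ) ≤ (N + c : ℝ) * ∑ d ∈ Ioc K (N + c), (1 : ℝ) / (d * d) :=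
        le_trans step1 step2
    _ ≤ (N + c : ℝ) * (1 / K) := mul_le_mul_of_nonneg_left step3 hNc
    _ = (N + c : ℝ) / K := by ring

/-- For every continuous `f : {0,1}^ℕ → ℂ`, the sequence `n ↦ f(Sⁿ𝛍²)` is Besicovitch
almost periodic. -/
theorem besicovitch_of_squarefree_orbit (f : C(ℕ → Fin 2, ℂ)) :
    BesicovitchAlmostPeriodic (fun n => f (shift₂^[n] muSq)) := by
  classical
  intro ε hε
  set C : ℝ := ‖f‖ + 1 with hC
  have hC0 : 0 < C := by
    rw [hC]
    have := norm_nonneg f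
    linarith
  have hfC : ∀ x, ‖f x‖ ≤ C := fun x => le_trans (f.norm_coe_le_norm x) (by rw [hC]; linarith)
  obtain ⟨L, hL⟩ := cylinder_approx f (show (0:ℝ) < ε/4 by linarith)
  set K : ℕ := Nat.ceil (16 * C * (L+1) / ε) + 1 with hKdef
  have hKpos : 0 < K := Nat.succ_pos _
  have hKR : (0:ℝ) < (K:ℝ) := Nat.cast_pos.2 hKpos
  have hKge : 16 * C * L ≤ ε * K := by
    have h1 : (16 * C * (L+1) / ε) ≤ (K : ℝ) := by
      refine le_trans (Nat.le_ceil _) ?_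
      rw [hKdef]
      push_cast
      linarith
    have h2 : 16 * C * (L+1) ≤ ε * K := by
      have := mul_le_mul_of_nonneg_right h1 hε.le
      rw [div_mul_cancel₀ _ hε.ne'] at this
      linarith [this]
    nlinarith
  set Q := ∏ d ∈ Finset.Icc 2 K, d * d with hQdef
  have hQpos : 0 < Q := prodQ_pos K
  set g : ℕ → ℂ := fun n => f (shift₂^[n] (muSqK K)) with hgdef
  have hgper : ∀ n, g (n + Q) = g n := by
    intro n
    have hfun : shift₂^[n + Q] (muSqK K) = shift₂^[n] (muSqK K) := by
      funext k
      rw [shift_iter, shift_iter, show k + (n + Q) = (k + n) + Q by ring, hQdef,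
        muSqK_periodic]
    simp only [hgdef, hfun]
  obtain ⟨c, α, hft⟩ := periodic_trig hQpos g hgper
  refine ⟨Q, c, α, ?_⟩
  set A : ℕ → ℝ := fun N => (N : ℝ)⁻¹ * ∑ t ∈ Finset.Icc 1 N,
      ‖f (shift₂^[t] muSq) - ∑ m : Fin Q, c m * Complex.exp (Complex.I * (α m) * t)‖ with hA
  have hA0 : ∀ N, 0 ≤ A N := by
    intro N
    apply mul_nonneg (by positivity)
    exact Finset.sum_nonneg fun t _ => norm_nonneg _
  have hbound : ∀ᶠ N in Filter.atTop, A N ≤ ε/4 + ε/4 := by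
    filter_upwards [Filter.eventually_ge_atTop (max 1 L)] with N hN
    have hN1 : 1 ≤ N := le_trans (le_max_left _ _) hN
    have hNL : L ≤ N := le_trans (le_max_right _ _) hN
    have hNR : (0:ℝ) < (N:ℝ) := by exact_mod_cast hN1
    set P : ℕ → Prop := fun t => ∀ k < L, muSq (k + t) = muSqK K (k + t) with hP
    -- termwise bounds
    have hterm : ∀ t : ℕ, ‖f (shift₂^[t] muSq) - ∑ m : Fin Q,
        c m * Complex.exp (Complex.I * (α m) * t)‖ = ‖f (shift₂^[t] muSq) - g t‖ := by
      intro t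
      rw [← hft t]
    have hgood : ∀ t, P t → ‖f (shift₂^[t] muSq) - g t‖ ≤ ε/4 := by
      intro t hPt
      apply hL
      intro i hi
      rw [shift_iter, shift_iter]
      exact hPt i hi
    have hbad : ∀ t, ‖f (shift₂^[t] muSq) - g t‖ ≤ 2 * C := by
      intro t
      calc ‖f (shift₂^[t] muSq) - g t‖ ≤ ‖f (shift₂^[t] muSq)‖ + ‖g t‖ := norm_sub_le _ _
        _ ≤ C + C := add_le_add (hfC _) (hfC _)
        _ = 2 * C := by ring
    -- split the sum
    have hsplit : ∑ t ∈ Finset.Icc 1 N, ‖f (shift₂^[t] muSq) - g t‖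
        = ∑ t ∈ (Finset.Icc 1 N).filter P, ‖f (shift₂^[t] muSq) - g t‖
          + ∑ t ∈ (Finset.Icc 1 N).filter (fun t => ¬ P t), ‖f (shift₂^[t] muSq) - g t‖ :=
      (Finset.sum_filter_add_sum_filter_not _ _ _).symm
    set B := ((Finset.Icc 1 N).filter (fun t => ¬ P t)).card with hB
    -- bad set count
    have hBsub : (Finset.Icc 1 N).filter (fun t => ¬ P t) ⊆
        (Finset.range L).biUnion (fun k =>
          (Finset.Icc 1 N).filter (fun n => ∃ d, K < d ∧ d * d ∣ n + (k + 1))) := by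
      intro t ht
      rw [Finset.mem_filter] at ht
      obtain ⟨ht1, ht2⟩ := ht
      have ht2' : ¬ ∀ k < L, muSq (k + t) = muSqK K (k + t) := ht2
      push_neg at ht2'
      obtain ⟨k, hk, hne⟩ := ht2'
      obtain ⟨d, hd1, hd2⟩ := muSq_diff K (k + t) hne
      rw [Finset.mem_biUnion]
      refine ⟨k, Finset.mem_range.2 hk, Finset.mem_filter.2 ⟨ht1, d, hd1, ?_⟩⟩
      have : t + (k + 1) = (k + t) + 1 := by ring
      rw [this]
      exact hd2
    have hBle : (B : ℝ) ≤ L * ((N + L : ℝ) / K) := by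
      have h1 : B ≤ ∑ k ∈ Finset.range L,
          ((Finset.Icc 1 N).filter (fun n => ∃ d, K < d ∧ d * d ∣ n + (k + 1))).card :=
        le_trans (Finset.card_le_card hBsub) Finset.card_biUnion_le
      have h2 : (B : ℝ) ≤ ∑ k ∈ Finset.range L,
          (((Finset.Icc 1 N).filter (fun n => ∃ d, K < d ∧ d * d ∣ n + (k + 1))).card : ℝ) := by
        exact_mod_cast h1
      refine le_trans h2 ?_
      have h3 : ∀ k ∈ Finset.range L,
          (((Finset.Icc 1 N).filter (fun n => ∃ d, K < d ∧ d * d ∣ n + (k + 1))).card : ℝ)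
          ≤ (N + L : ℝ) / K := by
        intro k hk
        rw [Finset.mem_range] at hk
        refine le_trans (count_bound N (k+1) K hKpos (Nat.succ_pos k)) ?_
        gcongr
        · push_cast
          have h4 : (k:ℝ) + 1 ≤ L := by exact_mod_cast hk
          linarith
      calc ∑ k ∈ Finset.range L,
            (((Finset.Icc 1 N).filter (fun n => ∃ d, K < d ∧ d * d ∣ n + (k + 1))).card : ℝ)
          ≤ ∑ _k ∈ Finset.range L, (N + L : ℝ) / K := Finset.sum_le_sum h3
        _ = L * ((N + L : ℝ) / K) := by rw [Finset.sum_const, Finset.card_range, nsmul_eq_mul]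
    -- assemble
    have hsum : ∑ t ∈ Finset.Icc 1 N, ‖f (shift₂^[t] muSq) - g t‖
        ≤ N * (ε/4) + (B : ℝ) * (2 * C) := by
      rw [hsplit]
      have hg1 : ∑ t ∈ (Finset.Icc 1 N).filter P, ‖f (shift₂^[t] muSq) - g t‖
          ≤ ((Finset.Icc 1 N).filter P).card * (ε/4) := by
        rw [← nsmul_eq_mul]
        apply Finset.sum_le_card_nsmul
        intro t ht
        exact hgood t (Finset.mem_filter.1 ht).2
      have hg2 : ∑ t ∈ (Finset.Icc 1 N).filter (fun t => ¬ P t), ‖f (shift₂^[t] muSq) - g t‖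
          ≤ (B : ℝ) * (2 * C) := by
        rw [← nsmul_eq_mul]
        apply Finset.sum_le_card_nsmul
        intro t _
        exact hbad t
      have hcard : (((Finset.Icc 1 N).filter P).card : ℝ) ≤ N := by
        have h1 : ((Finset.Icc 1 N).filter P).card ≤ (Finset.Icc 1 N).card :=
          Finset.card_filter_le _ _
        have h2 : (Finset.Icc 1 N).card = N := by
          rw [Nat.card_Icc]
          omega
        exact_mod_cast h2 ▸ h1
      calc _ ≤ (((Finset.Icc 1 N).filter P).card : ℝ) * (ε/4) + (B:ℝ) * (2*C) :=
            add_le_add hg1 hg2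
        _ ≤ N * (ε/4) + (B:ℝ) * (2*C) := by
            apply add_le_add_left
            apply mul_le_mul_of_nonneg_right hcard (by linarith)
    have hB2 : (B : ℝ) * (2 * C) ≤ N * (ε/4) := by
      have hNL2 : (N:ℝ) + L ≤ 2 * N := by
        have : (L:ℝ) ≤ N := by exact_mod_cast hNL
        linarith
      have hstep : (B : ℝ) ≤ L * (2 * N) / K := by
        refine le_trans hBle ?_
        rw [mul_div_assoc]
        apply mul_le_mul_of_nonneg_left ?_ (Nat.cast_nonneg L)
        apply (div_le_div_iff_of_pos_right hKR).mpr hNL2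
      calc (B : ℝ) * (2 * C) ≤ (L * (2 * N) / K) * (2 * C) := by
            apply mul_le_mul_of_nonneg_right hstep (by linarith)
        _ = (4 * C * L / K) * N := by ring
        _ ≤ (ε/4) * N := by
            apply mul_le_mul_of_nonneg_right ?_ (le_of_lt hNR)
            rw [div_le_iff₀ hKR]
            nlinarith [hKge]
        _ = N * (ε/4) := mul_comm _ _
    -- conclude
    simp only [hA]
    rw [Finset.sum_congr rfl fun t _ => hterm t]
    calc (N:ℝ)⁻¹ * ∑ t ∈ Finset.Icc 1 N, ‖f (shift₂^[t] muSq) - g t‖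
        ≤ (N:ℝ)⁻¹ * (N * (ε/4) + N * (ε/4)) := by
          apply mul_le_mul_of_nonneg_left ?_ (by positivity)
          exact le_trans hsum (by linarith)
      _ = ε/4 + ε/4 := by field_simp
  have hlim : Filter.limsup A Filter.atTop ≤ ε/4 + ε/4 := by
    apply Filter.limsup_le_of_le ?_ hbound
    exact Filter.isCoboundedUnder_le_of_eventually_le (Filter.atTop : Filter ℕ) (x := 0)
      (Filter.Eventually.of_forall hA0)
  calc Filter.limsup A Filter.atTop ≤ ε/4 + ε/4 := hlim
    _ < ε := by linarith
end

section
/- Let (P_n) and (Q_n) be sequences of Borel probability measures on the circle 𝕋 converging weakly to Borel probability measures P and Q respectively (meaning ∫ φ dP_n → ∫ φ dP and ∫ φ dQ_n → ∫ φ dQ for every continuous φ : 𝕋 → ℝ). Then limsup_{n→∞} G(P_n, Q_n) ≤ G(P, Q). -/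
open MeasureTheory Filter Finset

instance : Fact (0 < 2 * Real.pi) := ⟨by positivity⟩

/-- The affinity `G(η,ν) = ∫ √((dη/dλ)(dν/dλ)) dλ` between two measures on the circle,
computed with the dominating measure `λ = η + ν`. -/
noncomputable def affinity (η ν : Measure (AddCircle (2 * Real.pi))) : ℝ :=
  ∫ x, Real.sqrt ((η.rnDeriv (η + ν) x).toReal * (ν.rnDeriv (η + ν) x).toReal) ∂(η + ν)

namespace AffinityAux

local notation "T" => AddCircle (2 * Real.pi)

lemma sqrt_mul_le_add_div_two {a b : ℝ} (ha : 0 ≤ a) (hb : 0 ≤ b) :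
    Real.sqrt (a * b) ≤ (a + b) / 2 := by
  rw [Real.sqrt_mul ha]
  nlinarith [sq_nonneg (Real.sqrt a - Real.sqrt b), Real.sq_sqrt ha, Real.sq_sqrt hb,
    Real.sqrt_nonneg a, Real.sqrt_nonneg b]

lemma sqrt_add_le {a b : ℝ} (ha : 0 ≤ a) (hb : 0 ≤ b) :
    Real.sqrt (a + b) ≤ Real.sqrt a + Real.sqrt b := by
  have h : a + b ≤ (Real.sqrt a + Real.sqrt b) ^ 2 := by
    nlinarith [Real.sq_sqrt ha, Real.sq_sqrt hb, Real.sqrt_nonneg a, Real.sqrt_nonneg b,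
      mul_nonneg (Real.sqrt_nonneg a) (Real.sqrt_nonneg b)]
  calc Real.sqrt (a + b) ≤ Real.sqrt ((Real.sqrt a + Real.sqrt b) ^ 2) := Real.sqrt_le_sqrt h
    _ = Real.sqrt a + Real.sqrt b := Real.sqrt_sq (by positivity)

lemma key_pointwise {a b f g : ℝ} (ha : 0 ≤ a) (hb : 0 ≤ b) (hf : 0 ≤ f) (hg : 0 ≤ g)
    (hfg : 1 ≤ f * g) : Real.sqrt (a * b) ≤ (f * a + g * b) / 2 := by
  have h1 : a * b ≤ (f * a) * (g * b) := by nlinarith [mul_nonneg ha hb]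
  calc Real.sqrt (a * b) ≤ Real.sqrt ((f * a) * (g * b)) := Real.sqrt_le_sqrt h1
    _ ≤ _ := sqrt_mul_le_add_div_two (by positivity) (by positivity)

/-- The basic variational upper bound on the affinity. -/
lemma affinity_le (η ν : Measure T) [IsFiniteMeasure η] [IsFiniteMeasure ν]
    {f g : T → ℝ} (hf : Continuous f) (hg : Continuous g)
    (hf0 : ∀ x, 0 ≤ f x) (hg0 : ∀ x, 0 ≤ g x) (hfg : ∀ x, 1 ≤ f x * g x) :
    affinity η ν ≤ (∫ x, f x ∂η + ∫ x, g x ∂ν) / 2 := by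
  have hη : η ≪ η + ν := Measure.absolutelyContinuous_of_le (Measure.le_add_right le_rfl)
  have hν : ν ≪ η + ν := Measure.absolutelyContinuous_of_le (Measure.le_add_left le_rfl)
  set p : T → ℝ := fun x => (η.rnDeriv (η + ν) x).toReal with hp_def
  set q : T → ℝ := fun x => (ν.rnDeriv (η + ν) x).toReal with hq_def
  have hp_int : Integrable p (η + ν) := Measure.integrable_toReal_rnDeriv
  have hq_int : Integrable q (η + ν) := Measure.integrable_toReal_rnDeriv
  have hp_meas : Measurable p := (Measure.measurable_rnDeriv η (η + ν)).ennreal_toReal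
  have hq_meas : Measurable q := (Measure.measurable_rnDeriv ν (η + ν)).ennreal_toReal
  obtain ⟨Cf, hCf⟩ : ∃ C, ∀ x, ‖f x‖ ≤ C :=
    ⟨‖BoundedContinuousFunction.mkOfCompact ⟨f, hf⟩‖, fun x =>
      BoundedContinuousFunction.norm_coe_le_norm (BoundedContinuousFunction.mkOfCompact ⟨f, hf⟩) x⟩
  obtain ⟨Cg, hCg⟩ : ∃ C, ∀ x, ‖g x‖ ≤ C :=
    ⟨‖BoundedContinuousFunction.mkOfCompact ⟨g, hg⟩‖, fun x =>
      BoundedContinuousFunction.norm_coe_le_norm (BoundedContinuousFunction.mkOfCompact ⟨g, hg⟩) x⟩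
  have hfp_int : Integrable (fun x => f x * p x) (η + ν) :=
    hp_int.bdd_mul hf.aestronglyMeasurable (Filter.Eventually.of_forall hCf)
  have hgq_int : Integrable (fun x => g x * q x) (η + ν) :=
    hq_int.bdd_mul hg.aestronglyMeasurable (Filter.Eventually.of_forall hCg)
  have hsqrt_meas : Measurable fun x => Real.sqrt (p x * q x) :=
    Real.continuous_sqrt.measurable.comp (hp_meas.mul hq_meas)
  have hsqrt_int : Integrable (fun x => Real.sqrt (p x * q x)) (η + ν) := by
    refine Integrable.mono' ((hp_int.add hq_int).div_const 2)
      hsqrt_meas.aestronglyMeasurable (Filter.Eventually.of_forall fun x => ?_)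
    rw [Real.norm_eq_abs, abs_of_nonneg (Real.sqrt_nonneg _)]
    exact sqrt_mul_le_add_div_two ENNReal.toReal_nonneg ENNReal.toReal_nonneg
  have hle : affinity η ν ≤ ∫ x, (f x * p x + g x * q x) / 2 ∂(η + ν) := by
    refine integral_mono hsqrt_int ((hfp_int.add hgq_int).div_const 2) fun x => ?_
    exact key_pointwise ENNReal.toReal_nonneg ENNReal.toReal_nonneg (hf0 x) (hg0 x) (hfg x)
  refine hle.trans_eq ?_
  rw [integral_div, integral_add hfp_int hgq_int]
  haveI : η.HaveLebesgueDecomposition (η + ν) := Measure.haveLebesgueDecomposition_of_finiteMeasure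
  haveI : ν.HaveLebesgueDecomposition (η + ν) := Measure.haveLebesgueDecomposition_of_finiteMeasure
  have e1 : ∫ x, f x * p x ∂(η + ν) = ∫ x, f x ∂η := by
    rw [← MeasureTheory.integral_rnDeriv_smul hη (f := f)]
    congr 1 with x
    rw [smul_eq_mul, mul_comm]
  have e2 : ∫ x, g x * q x ∂(η + ν) = ∫ x, g x ∂ν := by
    rw [← MeasureTheory.integral_rnDeriv_smul hν (f := g)]
    congr 1 with x
    rw [smul_eq_mul, mul_comm]
  rw [e1, e2]


set_option maxHeartbeats 1000000 in
/-- Existence of a good continuous test function approximating `√(q/p)`. -/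
lemma exists_good (η ν : Measure T) [IsProbabilityMeasure η] [IsProbabilityMeasure ν]
    {ε : ℝ} (hε : 0 < ε) :
    ∃ f : T → ℝ, Continuous f ∧ (∀ x, 0 < f x) ∧
      ∫ x, f x ∂η + ∫ x, (f x)⁻¹ ∂ν ≤ 2 * affinity η ν + ε := by
  have hη : η ≪ η + ν := Measure.absolutelyContinuous_of_le (Measure.le_add_right le_rfl)
  have hν : ν ≪ η + ν := Measure.absolutelyContinuous_of_le (Measure.le_add_left le_rfl)
  set μ : Measure T := η + ν with hμ_def
  set p : T → ℝ := fun x => (η.rnDeriv μ x).toReal with hp_def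
  set q : T → ℝ := fun x => (ν.rnDeriv μ x).toReal with hq_def
  have hp0 : ∀ x, 0 ≤ p x := fun x => ENNReal.toReal_nonneg
  have hq0 : ∀ x, 0 ≤ q x := fun x => ENNReal.toReal_nonneg
  have hp_int : Integrable p μ := Measure.integrable_toReal_rnDeriv
  have hq_int : Integrable q μ := Measure.integrable_toReal_rnDeriv
  have hp_meas : Measurable p := (Measure.measurable_rnDeriv η μ).ennreal_toReal
  have hq_meas : Measurable q := (Measure.measurable_rnDeriv ν μ).ennreal_toReal
  have hp1 : ∀ᵐ x ∂μ, p x ≤ 1 := by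
    filter_upwards [Measure.rnDeriv_le_one_of_le (μ := η) (ν := μ) (Measure.le_add_right le_rfl)]
      with x hx
    simpa using ENNReal.toReal_mono ENNReal.one_ne_top hx
  have hq1 : ∀ᵐ x ∂μ, q x ≤ 1 := by
    filter_upwards [Measure.rnDeriv_le_one_of_le (μ := ν) (ν := μ) (Measure.le_add_left le_rfl)]
      with x hx
    simpa using ENNReal.toReal_mono ENNReal.one_ne_top hx
  -- choice of δ
  set δ : ℝ := min (ε / 16) (ε ^ 2 / 1024) with hδ_def
  have hδ : 0 < δ := lt_min (by positivity) (by positivity)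
  have hδ4 : 4 * δ ≤ ε / 4 := by
    have := min_le_left (ε / 16) (ε ^ 2 / 1024); simp only [← hδ_def] at this; linarith
  have hsqrtδ : Real.sqrt δ ≤ ε / 32 := by
    have h1 : δ ≤ (ε / 32) ^ 2 := by
      have := min_le_right (ε / 16) (ε ^ 2 / 1024); simp only [← hδ_def] at this
      nlinarith
    calc Real.sqrt δ ≤ Real.sqrt ((ε / 32) ^ 2) := Real.sqrt_le_sqrt h1
      _ = ε / 32 := Real.sqrt_sq (by positivity)
  have hδε : 8 * Real.sqrt δ + 4 * δ ≤ ε / 2 := by linarith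
  -- the truncation constants
  set c : ℝ := Real.sqrt (δ / (1 + δ)) with hc_def
  set C : ℝ := Real.sqrt ((1 + δ) / δ) with hC_def
  have hc_pos : 0 < c := Real.sqrt_pos.2 (by positivity)
  have hC_pos : 0 < C := Real.sqrt_pos.2 (by positivity)
  have hc1 : c ≤ 1 := Real.sqrt_le_one.2 (by rw [div_le_one (by positivity)]; linarith)
  have h1C : 1 ≤ C := Real.one_le_sqrt.2 (by rw [le_div_iff₀ hδ]; linarith)
  have hcC : c ≤ C := hc1.trans h1C
  -- the measurable function F and its truncation F0
  set F : T → ℝ := fun x => Real.sqrt ((q x + δ) / (p x + δ)) with hF_def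
  set F0 : T → ℝ := fun x => max c (min C (F x)) with hF0_def
  have hF_meas : Measurable F :=
    Real.continuous_sqrt.measurable.comp ((hq_meas.add measurable_const).div
      (hp_meas.add measurable_const))
  have hF0_meas : Measurable F0 := (measurable_const.max (measurable_const.min hF_meas))
  have hF0c : ∀ x, c ≤ F0 x := fun x => le_max_left _ _
  have hF0C : ∀ x, F0 x ≤ C := fun x => max_le hcC (min_le_left _ _)
  have hF0_pos : ∀ x, 0 < F0 x := fun x => hc_pos.trans_le (hF0c x)
  have hF0_eq : ∀ᵐ x ∂μ, F0 x = F x := by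
    filter_upwards [hp1, hq1] with x hpx hqx
    have hcF : c ≤ F x := by
      refine Real.sqrt_le_sqrt ?_
      refine div_le_div₀ (by linarith [hq0 x]) (by linarith [hq0 x]) (by positivity)
        (by linarith)
    have hFC : F x ≤ C := by
      refine Real.sqrt_le_sqrt ?_
      refine div_le_div₀ (by positivity) (by linarith) hδ (by linarith [hp0 x])
    rw [hF0_def]
    simp only [min_eq_right hFC, max_eq_right hcF]
  have hF0_int : Integrable F0 μ := by
    refine ⟨hF0_meas.aestronglyMeasurable, HasFiniteIntegral.of_bounded
      (C := C) (Filter.Eventually.of_forall fun x => ?_)⟩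
    rw [Real.norm_eq_abs, abs_of_pos (hF0_pos x)]
    exact hF0C x
  -- the comparison function R
  set R : T → ℝ := fun x => Real.sqrt ((p x + δ) * (q x + δ)) with hR_def
  have hR_meas : Measurable R :=
    Real.continuous_sqrt.measurable.comp ((hp_meas.add measurable_const).mul
      (hq_meas.add measurable_const))
  have hR_int : Integrable R μ := by
    refine Integrable.mono' (((hp_int.add (integrable_const δ)).add
      (hq_int.add (integrable_const δ))).div_const 2) hR_meas.aestronglyMeasurable
      (Filter.Eventually.of_forall fun x => ?_)
    rw [Real.norm_eq_abs, abs_of_nonneg (Real.sqrt_nonneg _)]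
    exact sqrt_mul_le_add_div_two (by linarith [hp0 x]) (by linarith [hq0 x])
  -- step 1 : ∫ F0 dη ≤ ∫ R dμ
  have hstep1 : ∫ x, F0 x ∂η ≤ ∫ x, R x ∂μ := by
    haveI : η.HaveLebesgueDecomposition μ := Measure.haveLebesgueDecomposition_of_finiteMeasure
    rw [← MeasureTheory.integral_rnDeriv_smul hη (f := F0)]
    have hint : Integrable (fun x => (η.rnDeriv μ x).toReal • F0 x) μ := by
      have : Integrable (fun x => F0 x * p x) μ :=
        hp_int.bdd_mul (c := C) hF0_meas.aestronglyMeasurable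
          (Filter.Eventually.of_forall fun x => by rw [Real.norm_eq_abs, abs_of_pos (hF0_pos x)]; exact hF0C x)
      refine this.congr (Filter.Eventually.of_forall fun x => ?_)
      exact mul_comm _ _
    refine integral_mono_ae hint hR_int ?_
    filter_upwards [hF0_eq, hp1] with x hx hpx
    rw [smul_eq_mul, hx]
    have hpδ : (0:ℝ) < p x + δ := by linarith [hp0 x]
    have : p x * F x = Real.sqrt (p x ^ 2 * ((q x + δ) / (p x + δ))) := by
      rw [Real.sqrt_mul (by positivity), Real.sqrt_sq (hp0 x)]
    rw [this]
    refine Real.sqrt_le_sqrt ?_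
    rw [mul_div_assoc', div_le_iff₀ hpδ]
    nlinarith [mul_le_mul_of_nonneg_right (show p x ^ 2 ≤ (p x + δ) ^ 2 by
      nlinarith [hp0 x, hδ.le]) (show (0:ℝ) ≤ q x + δ by linarith [hq0 x])]
  -- step 2 : ∫ F0⁻¹ dν ≤ ∫ R dμ
  have hF0inv_meas : Measurable fun x => (F0 x)⁻¹ := hF0_meas.inv
  have hstep2 : ∫ x, (F0 x)⁻¹ ∂ν ≤ ∫ x, R x ∂μ := by
    haveI : ν.HaveLebesgueDecomposition μ := Measure.haveLebesgueDecomposition_of_finiteMeasure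
    rw [← MeasureTheory.integral_rnDeriv_smul hν (f := fun x => (F0 x)⁻¹)]
    have hint : Integrable (fun x => (ν.rnDeriv μ x).toReal • (F0 x)⁻¹) μ := by
      have : Integrable (fun x => (F0 x)⁻¹ * q x) μ :=
        hq_int.bdd_mul (c := c⁻¹) hF0inv_meas.aestronglyMeasurable
          (Filter.Eventually.of_forall fun x => by
            rw [Real.norm_eq_abs, abs_of_pos (inv_pos.2 (hF0_pos x))]
            exact inv_anti₀ hc_pos (hF0c x))
      refine this.congr (Filter.Eventually.of_forall fun x => ?_)
      exact mul_comm _ _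
    refine integral_mono_ae hint hR_int ?_
    filter_upwards [hF0_eq, hq1] with x hx hqx
    rw [smul_eq_mul, hx]
    have hpδ : (0:ℝ) < p x + δ := by linarith [hp0 x]
    have hqδ : (0:ℝ) < q x + δ := by linarith [hq0 x]
    have hFinv : (F x)⁻¹ = Real.sqrt ((p x + δ) / (q x + δ)) := by
      rw [hF_def, ← Real.sqrt_inv, inv_div]
    rw [hFinv]
    have : q x * Real.sqrt ((p x + δ) / (q x + δ))
        = Real.sqrt (q x ^ 2 * ((p x + δ) / (q x + δ))) := by
      rw [Real.sqrt_mul (by positivity), Real.sqrt_sq (hq0 x)]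
    rw [this]
    refine Real.sqrt_le_sqrt ?_
    rw [mul_div_assoc', div_le_iff₀ hqδ]
    nlinarith [mul_le_mul_of_nonneg_right (show q x ^ 2 ≤ (q x + δ) ^ 2 by
      nlinarith [hq0 x, hδ.le]) (show (0:ℝ) ≤ p x + δ by linarith [hp0 x])]
  -- step 3 : ∫ R dμ ≤ affinity + 2 * (2√δ + δ)
  have hμuniv : (μ Set.univ).toReal = 2 := by
    rw [hμ_def, Measure.add_apply, measure_univ, measure_univ]
    norm_num
  have hsqrtpq_meas : Measurable fun x => Real.sqrt (p x * q x) :=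
    Real.continuous_sqrt.measurable.comp (hp_meas.mul hq_meas)
  have hsqrtpq_int : Integrable (fun x => Real.sqrt (p x * q x)) μ := by
    refine Integrable.mono' ((hp_int.add hq_int).div_const 2)
      hsqrtpq_meas.aestronglyMeasurable (Filter.Eventually.of_forall fun x => ?_)
    rw [Real.norm_eq_abs, abs_of_nonneg (Real.sqrt_nonneg _)]
    exact sqrt_mul_le_add_div_two (hp0 x) (hq0 x)
  have hstep3 : ∫ x, R x ∂μ ≤ affinity η ν + (2 * (2 * Real.sqrt δ + δ)) := by
    have hptwise : ∀ᵐ x ∂μ, R x ≤ Real.sqrt (p x * q x) + (2 * Real.sqrt δ + δ) := by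
      filter_upwards [hp1, hq1] with x hpx hqx
      have e : (p x + δ) * (q x + δ) = p x * q x + (δ * (p x + q x) + δ ^ 2) := by ring
      rw [hR_def]
      calc Real.sqrt ((p x + δ) * (q x + δ))
          ≤ Real.sqrt (p x * q x) + Real.sqrt (δ * (p x + q x) + δ ^ 2) := by
            rw [e]
            exact sqrt_add_le (mul_nonneg (hp0 x) (hq0 x))
              (by nlinarith [hp0 x, hq0 x, hδ.le])
        _ ≤ Real.sqrt (p x * q x) + (Real.sqrt (δ * (p x + q x)) + Real.sqrt (δ ^ 2)) := by
            have := sqrt_add_le (a := δ * (p x + q x)) (b := δ ^ 2)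
              (by nlinarith [hp0 x, hq0 x, hδ.le]) (by positivity)
            linarith
        _ ≤ Real.sqrt (p x * q x) + (2 * Real.sqrt δ + δ) := by
            have h1 : Real.sqrt (δ * (p x + q x)) ≤ 2 * Real.sqrt δ := by
              calc Real.sqrt (δ * (p x + q x)) ≤ Real.sqrt (δ * 4) := by
                    refine Real.sqrt_le_sqrt ?_
                    nlinarith [hδ.le]
                _ = 2 * Real.sqrt δ := by
                    rw [mul_comm, Real.sqrt_mul (by norm_num : (0:ℝ) ≤ 4)]
                    rw [show Real.sqrt 4 = 2 by
                      rw [show (4:ℝ) = 2 ^ 2 by norm_num, Real.sqrt_sq (by norm_num)]]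
            have h2 : Real.sqrt (δ ^ 2) = δ := Real.sqrt_sq hδ.le
            linarith
    have hle := integral_mono_ae hR_int
      (hsqrtpq_int.add (integrable_const (2 * Real.sqrt δ + δ))) hptwise
    simp only [Pi.add_apply] at hle
    rw [integral_add hsqrtpq_int (integrable_const _)] at hle
    simp only [integral_const, smul_eq_mul, measureReal_def, hμuniv] at hle
    have haff : affinity η ν = ∫ x, Real.sqrt (p x * q x) ∂μ := rfl
    rw [haff]
    linarith
  -- approximation by a continuous function
  set ε' : ℝ := (ε / 4) * min 1 (c ^ 2) with hε'_def
  have hε'_pos : 0 < ε' := by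
    have : (0:ℝ) < min 1 (c ^ 2) := lt_min one_pos (by positivity)
    positivity
  obtain ⟨g0, hg0_close, hg0_int⟩ := hF0_int.exists_boundedContinuous_integral_sub_le hε'_pos
  set f : T → ℝ := fun x => max c (min C (g0 x)) with hf_def
  refine ⟨f, continuous_const.max (continuous_const.min g0.continuous), fun x =>
    hc_pos.trans_le (le_max_left _ _), ?_⟩
  have hfc : ∀ x, c ≤ f x := fun x => le_max_left _ _
  have hfC : ∀ x, f x ≤ C := fun x => max_le hcC (min_le_left _ _)
  have hf_pos : ∀ x, 0 < f x := fun x => hc_pos.trans_le (hfc x)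
  -- clamping is 1-Lipschitz
  have hclamp : ∀ x, |f x - F0 x| ≤ ‖F0 x - g0 x‖ := by
    intro x
    rw [Real.norm_eq_abs, abs_sub_comm (F0 x) (g0 x)]
    have hs1 : c ≤ F0 x := hF0c x
    have hs2 : F0 x ≤ C := hF0C x
    rcases le_total (g0 x) c with h1 | h1
    · rw [hf_def]
      simp only [min_eq_right (h1.trans hcC), max_eq_left h1]
      rw [abs_of_nonpos (by linarith), abs_of_nonpos (by linarith)]
      linarith
    · rcases le_total (g0 x) C with h2 | h2
      · rw [hf_def]
        simp only [min_eq_right h2, max_eq_right h1]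
        exact le_rfl
      · rw [hf_def]
        simp only [min_eq_left h2, max_eq_right hcC]
        rw [abs_of_nonneg (by linarith), abs_of_nonneg (by linarith)]
        linarith
  have hdiff_int : Integrable (fun x => ‖F0 x - g0 x‖) μ := (hF0_int.sub hg0_int).norm
  have hdiff_nonneg : ∀ x, 0 ≤ ‖F0 x - g0 x‖ := fun x => norm_nonneg _
  have hdiff_η : ∫ x, ‖F0 x - g0 x‖ ∂η ≤ ε' := by
    refine le_trans (integral_mono_measure (Measure.le_add_right le_rfl)
      (Filter.Eventually.of_forall hdiff_nonneg) hdiff_int) hg0_close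
  have hdiff_ν : ∫ x, ‖F0 x - g0 x‖ ∂ν ≤ ε' := by
    refine le_trans (integral_mono_measure (Measure.le_add_left le_rfl)
      (Filter.Eventually.of_forall hdiff_nonneg) hdiff_int) hg0_close
  -- integrability of the various pieces w.r.t. η and ν
  have hF0_int_η : Integrable F0 η := hF0_int.mono_measure (Measure.le_add_right le_rfl)
  have hF0inv_int_ν : Integrable (fun x => (F0 x)⁻¹) ν := by
    refine ⟨hF0inv_meas.aestronglyMeasurable, HasFiniteIntegral.of_bounded
      (C := c⁻¹) (Filter.Eventually.of_forall fun x => ?_)⟩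
    rw [Real.norm_eq_abs, abs_of_pos (inv_pos.2 (hF0_pos x))]
    exact inv_anti₀ hc_pos (hF0c x)
  have hdiff_int_η : Integrable (fun x => ‖F0 x - g0 x‖) η :=
    hdiff_int.mono_measure (Measure.le_add_right le_rfl)
  have hdiff_int_ν : Integrable (fun x => ‖F0 x - g0 x‖) ν :=
    hdiff_int.mono_measure (Measure.le_add_left le_rfl)
  have hf_meas : Measurable f :=
    measurable_const.max (measurable_const.min g0.continuous.measurable)
  have hf_int_η : Integrable f η := by
    refine ⟨hf_meas.aestronglyMeasurable, HasFiniteIntegral.of_bounded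
      (C := C) (Filter.Eventually.of_forall fun x => ?_)⟩
    rw [Real.norm_eq_abs, abs_of_pos (hf_pos x)]
    exact hfC x
  have hfinv_int_ν : Integrable (fun x => (f x)⁻¹) ν := by
    refine ⟨hf_meas.inv.aestronglyMeasurable, HasFiniteIntegral.of_bounded
      (C := c⁻¹) (Filter.Eventually.of_forall fun x => ?_)⟩
    rw [Real.norm_eq_abs, abs_of_pos (inv_pos.2 (hf_pos x))]
    exact inv_anti₀ hc_pos (hfc x)
  -- compare ∫ f dη with ∫ F0 dη
  have hcmp1 : ∫ x, f x ∂η ≤ ∫ x, F0 x ∂η + ε' := by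
    have hptwise : ∀ x, f x ≤ F0 x + ‖F0 x - g0 x‖ := by
      intro x
      have := hclamp x
      have h1 : f x - F0 x ≤ |f x - F0 x| := le_abs_self _
      linarith
    calc ∫ x, f x ∂η ≤ ∫ x, (F0 x + ‖F0 x - g0 x‖) ∂η :=
          integral_mono hf_int_η (hF0_int_η.add hdiff_int_η) hptwise
      _ = ∫ x, F0 x ∂η + ∫ x, ‖F0 x - g0 x‖ ∂η := integral_add hF0_int_η hdiff_int_η
      _ ≤ ∫ x, F0 x ∂η + ε' := by linarith
  -- compare ∫ f⁻¹ dν with ∫ F0⁻¹ dν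
  have hcmp2 : ∫ x, (f x)⁻¹ ∂ν ≤ ∫ x, (F0 x)⁻¹ ∂ν + ε' * c⁻¹ ^ 2 := by
    have hptwise : ∀ x, (f x)⁻¹ ≤ (F0 x)⁻¹ + c⁻¹ ^ 2 * ‖F0 x - g0 x‖ := by
      intro x
      have hfx := hf_pos x
      have hF0x := hF0_pos x
      have he : (f x)⁻¹ - (F0 x)⁻¹ = (F0 x - f x) / (f x * F0 x) := by
        field_simp
      have habs : |(f x)⁻¹ - (F0 x)⁻¹| ≤ c⁻¹ ^ 2 * ‖F0 x - g0 x‖ := by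
        rw [he, abs_div, abs_of_pos (mul_pos hfx hF0x)]
        have hnum : |F0 x - f x| ≤ ‖F0 x - g0 x‖ := by
          rw [abs_sub_comm]; exact hclamp x
        have hden : c ^ 2 ≤ f x * F0 x := by
          calc c ^ 2 = c * c := sq c
            _ ≤ f x * F0 x := mul_le_mul (hfc x) (hF0c x) hc_pos.le (hf_pos x).le
        calc |F0 x - f x| / (f x * F0 x) ≤ ‖F0 x - g0 x‖ / c ^ 2 :=
              div_le_div₀ (norm_nonneg _) hnum (by positivity) hden
          _ = c⁻¹ ^ 2 * ‖F0 x - g0 x‖ := by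
              rw [inv_pow, div_eq_mul_inv, mul_comm]
      have h1 : (f x)⁻¹ - (F0 x)⁻¹ ≤ |(f x)⁻¹ - (F0 x)⁻¹| := le_abs_self _
      linarith
    calc ∫ x, (f x)⁻¹ ∂ν ≤ ∫ x, ((F0 x)⁻¹ + c⁻¹ ^ 2 * ‖F0 x - g0 x‖) ∂ν :=
          integral_mono hfinv_int_ν (hF0inv_int_ν.add (hdiff_int_ν.const_mul _)) hptwise
      _ = ∫ x, (F0 x)⁻¹ ∂ν + c⁻¹ ^ 2 * ∫ x, ‖F0 x - g0 x‖ ∂ν := by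
          rw [integral_add hF0inv_int_ν (hdiff_int_ν.const_mul _), integral_const_mul]
      _ ≤ ∫ x, (F0 x)⁻¹ ∂ν + ε' * c⁻¹ ^ 2 := by
          have : c⁻¹ ^ 2 * ∫ x, ‖F0 x - g0 x‖ ∂ν ≤ c⁻¹ ^ 2 * ε' :=
            mul_le_mul_of_nonneg_left hdiff_ν (by positivity)
          linarith [this]
  -- the error terms from ε'
  have herr : ε' + ε' * c⁻¹ ^ 2 ≤ ε / 2 := by
    have h1 : min 1 (c ^ 2) ≤ 1 := min_le_left _ _
    have h2 : min 1 (c ^ 2) * c⁻¹ ^ 2 ≤ 1 := by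
      have : min 1 (c ^ 2) * c⁻¹ ^ 2 ≤ c ^ 2 * c⁻¹ ^ 2 :=
        mul_le_mul_of_nonneg_right (min_le_right _ _) (by positivity)
      have he : c ^ 2 * c⁻¹ ^ 2 = 1 := by
        rw [inv_pow]
        exact mul_inv_cancel₀ (by positivity)
      linarith
    have : ε' + ε' * c⁻¹ ^ 2 = (ε / 4) * (min 1 (c ^ 2) + min 1 (c ^ 2) * c⁻¹ ^ 2) := by
      rw [hε'_def]; ring
    rw [this]
    calc (ε / 4) * (min 1 (c ^ 2) + min 1 (c ^ 2) * c⁻¹ ^ 2) ≤ (ε / 4) * (1 + 1) :=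
          mul_le_mul_of_nonneg_left (by linarith) (by positivity)
      _ = ε / 2 := by ring
  -- put everything together
  have := hstep1
  have := hstep2
  have := hstep3
  calc ∫ x, f x ∂η + ∫ x, (f x)⁻¹ ∂ν
      ≤ (∫ x, F0 x ∂η + ε') + (∫ x, (F0 x)⁻¹ ∂ν + ε' * c⁻¹ ^ 2) := by
        linarith [hcmp1, hcmp2]
    _ ≤ (∫ x, R x ∂μ + ∫ x, R x ∂μ) + (ε' + ε' * c⁻¹ ^ 2) := by linarith
    _ ≤ 2 * (affinity η ν + (2 * (2 * Real.sqrt δ + δ))) + ε / 2 := by linarith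
    _ ≤ 2 * affinity η ν + ε := by linarith

end AffinityAux

/-- Coquet–Kamae–Mendès-France: the affinity is upper semicontinuous along weakly
convergent sequences of probability measures on the circle. -/
theorem affinity_limsup_le_of_weak_convergence
    (P Q : ℕ → Measure (AddCircle (2 * Real.pi)))
    (hP : ∀ n, IsProbabilityMeasure (P n)) (hQ : ∀ n, IsProbabilityMeasure (Q n))
    (Plim Qlim : Measure (AddCircle (2 * Real.pi)))
    (hPlim : IsProbabilityMeasure Plim) (hQlim : IsProbabilityMeasure Qlim)
    (hPconv : ∀ φ : C(AddCircle (2 * Real.pi), ℝ),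
      Tendsto (fun n => ∫ x, φ x ∂(P n)) atTop (nhds (∫ x, φ x ∂Plim)))
    (hQconv : ∀ φ : C(AddCircle (2 * Real.pi), ℝ),
      Tendsto (fun n => ∫ x, φ x ∂(Q n)) atTop (nhds (∫ x, φ x ∂Qlim))) :
    Filter.limsup (fun n => affinity (P n) (Q n)) atTop ≤ affinity Plim Qlim := by
  have haff_nonneg : ∀ n, 0 ≤ affinity (P n) (Q n) := fun n =>
    integral_nonneg fun x => Real.sqrt_nonneg _
  refine le_of_forall_pos_le_add fun ε hε => ?_
  obtain ⟨f, hf_cont, hf_pos, hf_bound⟩ := AffinityAux.exists_good Plim Qlim hε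
  set g : AddCircle (2 * Real.pi) → ℝ := fun x => (f x)⁻¹ with hg_def
  have hg_cont : Continuous g := hf_cont.inv₀ fun x => (hf_pos x).ne'
  have hstep : ∀ n, affinity (P n) (Q n) ≤ (∫ x, f x ∂(P n) + ∫ x, g x ∂(Q n)) / 2 := by
    intro n
    haveI := hP n; haveI := hQ n
    exact AffinityAux.affinity_le (P n) (Q n) hf_cont hg_cont (fun x => (hf_pos x).le)
      (fun x => (inv_pos.2 (hf_pos x)).le)
      (fun x => le_of_eq (mul_inv_cancel₀ (hf_pos x).ne').symm)
  have hPf := hPconv ⟨f, hf_cont⟩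
  have hQg := hQconv ⟨g, hg_cont⟩
  simp only [ContinuousMap.coe_mk] at hPf hQg
  have htend : Tendsto (fun n => (∫ x, f x ∂(P n) + ∫ x, g x ∂(Q n)) / 2) atTop
      (nhds ((∫ x, f x ∂Plim + ∫ x, g x ∂Qlim) / 2)) := (hPf.add hQg).div_const 2
  calc Filter.limsup (fun n => affinity (P n) (Q n)) atTop
      ≤ Filter.limsup (fun n => (∫ x, f x ∂(P n) + ∫ x, g x ∂(Q n)) / 2) atTop := by
        refine Filter.limsup_le_limsup (Filter.Eventually.of_forall hstep) ?_ ?_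
        · exact Filter.isCoboundedUnder_le_of_le atTop (x := 0) fun n => haff_nonneg n
        · exact htend.isBoundedUnder_le
    _ = (∫ x, f x ∂Plim + ∫ x, g x ∂Qlim) / 2 := htend.limsup_eq
    _ ≤ affinity Plim Qlim + ε := by linarith [hf_bound]
end

section
/- Let (X, 𝒜, μ) be a probability space and let 𝒞 ⊆ 𝒜 be a sub-σ-algebra which is (i) non-atomic modulo μ: every 𝒞-measurable set A with μ(A) > 0 contains a 𝒞-measurable subset B with 0 < μ(B) < μ(A); and (ii) proper: there exists a bounded 𝒜-measurable function which is not μ-a.e. equal to any 𝒞-measurable function. Then the orthogonal complement of L²(X, 𝒞, μ) inside L²(X, 𝒜, μ) is infinite-dimensional. -/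
open MeasureTheory Filter Finset

set_option maxHeartbeats 1000000
set_option synthInstance.maxHeartbeats 400000

section Aux

variable {X : Type*} {m : MeasurableSpace X} [mX : MeasurableSpace X] {μ : Measure X}

/-- Split a positive-measure `m`-set into `n` disjoint positive-measure `m`-subsets. -/
lemma aux_exists_disjoint_pos [IsFiniteMeasure μ] (hm : m ≤ mX)
    (hnonatomic : ∀ A : Set X, MeasurableSet[m] A → 0 < μ A →
      ∃ B : Set X, MeasurableSet[m] B ∧ B ⊆ A ∧ 0 < μ B ∧ μ B < μ A) :
    ∀ (n : ℕ) (A : Set X), MeasurableSet[m] A → 0 < μ A →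
      ∃ B : Fin n → Set X, (∀ i, MeasurableSet[m] (B i)) ∧ (∀ i, B i ⊆ A) ∧
        (∀ i, 0 < μ (B i)) ∧ Pairwise (Function.onFun Disjoint B) := by
  intro n
  induction n with
  | zero =>
    intro A _ _
    exact ⟨fun i => i.elim0, fun i => i.elim0, fun i => i.elim0, fun i => i.elim0,
      fun i _ _ => i.elim0⟩
  | succ n ih =>
    intro A hA hApos
    obtain ⟨B0, hB0m, hB0A, hB0pos, hB0lt⟩ := hnonatomic A hA hApos
    have hdiff : μ (A \ B0) = μ A - μ B0 :=
      measure_diff hB0A (hm B0 hB0m).nullMeasurableSet (measure_ne_top μ B0)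
    have hdiffpos : 0 < μ (A \ B0) := by
      rw [hdiff]; exact tsub_pos_of_lt hB0lt
    obtain ⟨B, hBm, hBA, hBpos, hBdisj⟩ := ih (A \ B0) (hA.diff hB0m) hdiffpos
    refine ⟨Fin.cons B0 B, ?_, ?_, ?_, ?_⟩
    · intro i
      rcases Fin.eq_zero_or_eq_succ i with rfl | ⟨i', rfl⟩
      · simpa using hB0m
      · simpa using hBm i'
    · intro i
      rcases Fin.eq_zero_or_eq_succ i with rfl | ⟨i', rfl⟩
      · simpa using hB0A
      · simpa using (hBA i').trans Set.diff_subset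
    · intro i
      rcases Fin.eq_zero_or_eq_succ i with rfl | ⟨i', rfl⟩
      · simpa using hB0pos
      · simpa using hBpos i'
    · intro i j hij
      rcases Fin.eq_zero_or_eq_succ i with rfl | ⟨i', rfl⟩ <;>
        rcases Fin.eq_zero_or_eq_succ j with rfl | ⟨j', rfl⟩
      · exact absurd rfl hij
      · simpa [Function.onFun] using
          Set.disjoint_of_subset_right (hBA j') Set.disjoint_sdiff_right
      · simpa [Function.onFun] using
          Set.disjoint_of_subset_left (hBA i') Set.disjoint_sdiff_left
      · have hne : i' ≠ j' := fun h => hij (by rw [h])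
        simpa [Function.onFun] using hBdisj hne

/-- The real `L²` inner product is the integral of the pointwise product. -/
lemma aux_inner_eq_integral (v w : Lp ℝ 2 μ) :
    (inner ℝ v w : ℝ) = ∫ x, v x * w x ∂μ := by
  rw [L2.inner_def]
  simp [RCLike.inner_apply, mul_comm]

/-- Indicator (by an `m`-measurable set) of an element of the orthocomplement of `lpMeas`
stays in the orthocomplement. -/
lemma aux_indicator_mem_orthogonal (hm : m ≤ mX) {h : Lp ℝ 2 μ}
    (hh : h ∈ (lpMeas ℝ ℝ m 2 μ : Submodule ℝ (Lp ℝ 2 μ))ᗮ) {B : Set X}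
    (hB : MeasurableSet[m] B) :
    ((Lp.memLp h).indicator (hm B hB)).toLp (B.indicator ⇑h)
      ∈ (lpMeas ℝ ℝ m 2 μ : Submodule ℝ (Lp ℝ 2 μ))ᗮ := by
  rw [Submodule.mem_orthogonal]
  intro u hu
  have hu' : AEStronglyMeasurable[m] (⇑u) μ := mem_lpMeas_iff_aestronglyMeasurable.mp hu
  obtain ⟨g, hgm, hgeq⟩ := hu'
  have huB : MemLp (B.indicator ⇑u) 2 μ := (Lp.memLp u).indicator (hm B hB)
  have huBK : huB.toLp (B.indicator ⇑u) ∈ lpMeas ℝ ℝ m 2 μ := by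
    rw [mem_lpMeas_iff_aestronglyMeasurable]
    refine ⟨B.indicator g, hgm.indicator hB, ?_⟩
    refine huB.coeFn_toLp.trans (hgeq.mono fun x hx => ?_)
    by_cases hxB : x ∈ B <;>
      simp [Set.indicator_of_mem, Set.indicator_of_notMem, hxB, hx]
  have hzero : (inner ℝ (huB.toLp (B.indicator ⇑u)) h : ℝ) = 0 :=
    (Submodule.mem_orthogonal _ h).mp hh _ huBK
  rw [aux_inner_eq_integral]
  rw [aux_inner_eq_integral] at hzero
  rw [← hzero]
  refine integral_congr_ae ?_
  filter_upwards [((Lp.memLp h).indicator (hm B hB)).coeFn_toLp, huB.coeFn_toLp]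
    with x h1 h2
  rw [h1, h2]
  by_cases hxB : x ∈ B <;>
    simp [Set.indicator_of_mem, Set.indicator_of_notMem, hxB]

end Aux

/-- Rokhlin's lemma: if `𝒞` is a proper, non-atomic (mod `μ`) sub-σ-algebra of a
probability space `(X, 𝒜, μ)`, then the orthogonal complement of `L²(X, 𝒞, μ)` inside
`L²(X, 𝒜, μ)` is infinite-dimensional. -/
theorem orthocomplement_of_proper_nonatomic_subalgebra_infinite_dimensional
    {X : Type*} {mX : MeasurableSpace X} (μ : Measure X) [IsProbabilityMeasure μ]
    (m : MeasurableSpace X) (hm : m ≤ mX)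
    (hnonatomic : ∀ A : Set X, MeasurableSet[m] A → 0 < μ A →
      ∃ B : Set X, MeasurableSet[m] B ∧ B ⊆ A ∧ 0 < μ B ∧ μ B < μ A)
    (hproper : ∃ f : X → ℝ, Measurable[mX] f ∧ (∃ C : ℝ, ∀ x, |f x| ≤ C) ∧
      ¬∃ g : X → ℝ, Measurable[m] g ∧ f =ᵐ[μ] g) :
    ¬FiniteDimensional ℝ ((@lpMeas X ℝ ℝ _ _ _ m mX 2 μ)ᗮ : Submodule ℝ (Lp ℝ 2 μ)) := by
  intro hfd
  letI : MeasurableSpace X := mX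
  haveI : Fact (m ≤ mX) := ⟨hm⟩
  obtain ⟨f, hfmeas, ⟨C, hfC⟩, hfne⟩ := hproper
  have hfaesm : AEStronglyMeasurable f μ := hfmeas.aestronglyMeasurable
  have hfmem : MemLp f 2 μ :=
    MemLp.of_bound hfaesm C (Eventually.of_forall fun x => by
      simpa [Real.norm_eq_abs] using hfC x)
  set K : Submodule ℝ (Lp ℝ 2 μ) := lpMeas ℝ ℝ m 2 μ with hK
  set F : Lp ℝ 2 μ := hfmem.toLp f with hF
  set h : Lp ℝ 2 μ := F - (K.subtype (K.orthogonalProjectionOnto F)) with hh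
  have hhK : h ∈ Kᗮ := K.sub_starProjection_mem_orthogonal F
  have hhne : h ≠ 0 := by
    intro h0
    have hFK : F ∈ K := by
      have hFeq : F = (K.subtype (K.orthogonalProjectionOnto F)) := by
        rwa [hh, sub_eq_zero] at h0
      rw [hFeq]; exact (K.orthogonalProjectionOnto F).2
    rw [hK, mem_lpMeas_iff_aestronglyMeasurable] at hFK
    obtain ⟨g, hgm, hgeq⟩ := hFK
    exact hfne ⟨g, hgm.measurable, hfmem.coeFn_toLp.symm.trans hgeq⟩
  -- h² is integrable with positive integral
  have hh2int : Integrable (fun x => h x * h x) μ := by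
    have := L2.integrable_inner (𝕜 := ℝ) h h
    simpa [RCLike.inner_apply, sq] using this
  have hh2pos : 0 < ∫ x, h x * h x ∂μ := by
    rcases (integral_nonneg (f := fun x => h x * h x) fun x => mul_self_nonneg (h x)).lt_or_eq with hlt | heq
    · exact hlt
    · exfalso
      have : (fun x => h x * h x) =ᵐ[μ] 0 :=
        (integral_eq_zero_iff_of_nonneg (fun x => mul_self_nonneg _) hh2int).mp heq.symm
      have : ⇑h =ᵐ[μ] 0 := this.mono fun x hx => by
        simpa [mul_self_eq_zero] using hx
      exact hhne (Lp.eq_zero_iff_ae_eq_zero.mpr this)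
  -- the conditional expectation of h²
  set φ : X → ℝ := μ[(fun x => h x * h x)|m] with hφ
  have hφint : Integrable φ μ := integrable_condExp
  have hφnn : 0 ≤ᵐ[μ] φ := condExp_nonneg (Eventually.of_forall fun x => mul_self_nonneg _)
  have hφtot : ∫ x, φ x ∂μ = ∫ x, h x * h x ∂μ := integral_condExp hm
  set A : Set X := φ ⁻¹' Set.Ioi 0 with hA
  have hAm : MeasurableSet[m] A :=
    stronglyMeasurable_condExp.measurable measurableSet_Ioi
  have hApos : 0 < μ A := by
    rcases (zero_le : 0 ≤ μ A).lt_or_eq with hlt | heq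
    · exact hlt
    · exfalso
      have hae : ∀ᵐ x ∂μ, ¬(0 < φ x) := by
        rw [ae_iff]
        simpa [hA, Set.preimage, Set.mem_Ioi] using heq.symm
      have : ∫ x, φ x ∂μ ≤ 0 :=
        integral_nonpos_of_ae (hae.mono fun x hx => not_lt.mp hx)
      rw [hφtot] at this
      exact absurd this (not_le.mpr hh2pos)
  -- split A into finrank + 1 disjoint positive-measure m-sets
  set n : ℕ := Module.finrank ℝ (Kᗮ : Submodule ℝ (Lp ℝ 2 μ)) with hn
  obtain ⟨B, hBm, hBA, hBpos, hBdisj⟩ :=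
    aux_exists_disjoint_pos hm hnonatomic (n + 1) A hAm hApos
  -- the indicator pieces of h
  set v : Fin (n + 1) → Lp ℝ 2 μ :=
    fun i => ((Lp.memLp h).indicator (hm (B i) (hBm i))).toLp ((B i).indicator ⇑h) with hv
  have hveq : ∀ i, ⇑(v i) =ᵐ[μ] (B i).indicator ⇑h :=
    fun i => MemLp.coeFn_toLp _
  have hvmem : ∀ i, v i ∈ Kᗮ := fun i => aux_indicator_mem_orthogonal hm hhK (hBm i)
  -- each piece is nonzero
  have hvne : ∀ i, v i ≠ 0 := by
    intro i h0
    -- the set integral of h² over B i is positive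
    have hset : ∫ x in B i, h x * h x ∂μ = ∫ x in B i, φ x ∂μ :=
      (setIntegral_condExp hm hh2int (hBm i)).symm
    have hsetpos : 0 < ∫ x in B i, φ x ∂μ := by
      rw [setIntegral_pos_iff_support_of_nonneg_ae (ae_restrict_of_ae hφnn)
        hφint.integrableOn]
      have hsub : B i ⊆ Function.support φ := fun x hx =>
        ne_of_gt (Set.mem_Ioi.mp (hBA i hx))
      rw [Set.inter_eq_self_of_subset_right hsub]
      exact hBpos i
    -- but it is zero if v i = 0
    have hind0 : (B i).indicator ⇑h =ᵐ[μ] 0 := by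
      have hcoe := hveq i
      rw [h0] at hcoe
      exact hcoe.symm.trans (Lp.coeFn_zero ℝ 2 μ)
    have hres : ∀ᵐ x ∂μ.restrict (B i), h x * h x = 0 := by
      filter_upwards [ae_restrict_mem (hm (B i) (hBm i)), ae_restrict_of_ae hind0]
        with x hxB hx0
      rw [Set.indicator_of_mem hxB] at hx0
      simp [hx0]
    have : ∫ x in B i, h x * h x ∂μ = 0 := by
      rw [integral_congr_ae hres]; simp
    rw [hset] at this
    exact absurd this (ne_of_gt hsetpos)
  -- the pieces are pairwise orthogonal
  have hvorth : ∀ i j, i ≠ j → (inner ℝ (v i) (v j) : ℝ) = 0 := by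
    intro i j hij
    rw [aux_inner_eq_integral]
    have : ∀ᵐ x ∂μ, v i x * v j x = 0 := by
      filter_upwards [hveq i, hveq j] with x h1 h2
      rw [h1, h2]
      by_cases hxi : x ∈ B i
      · have hxj : x ∉ B j := fun hxj => (hBdisj hij).le_bot ⟨hxi, hxj⟩
        simp [Set.indicator_of_notMem hxj]
      · simp [Set.indicator_of_notMem hxi]
    rw [integral_congr_ae this]; simp
  -- assemble a linearly independent family in the orthocomplement
  set w : Fin (n + 1) → (Kᗮ : Submodule ℝ (Lp ℝ 2 μ)) := fun i => ⟨v i, hvmem i⟩ with hw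
  have hwli : LinearIndependent ℝ w := by
    refine linearIndependent_of_ne_zero_of_inner_eq_zero ?_ ?_
    · intro i h0
      exact hvne i (by simpa [hw, Submodule.mk_eq_zero] using h0)
    · intro i j hij
      have := hvorth i j hij
      simpa [hw, Submodule.coe_inner] using this
  have hcard := hwli.fintype_card_le_finrank
  simp only [Fintype.card_fin] at hcard
  omega
end
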